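/- Let p be a prime and let λ = (a_1^{b_1}, …, a_h^{b_h}) be a p-regular partition, where a_1 > a_2 > … > a_h ≥ 1 and 1 ≤ b_i ≤ p − 1 for all i. Then λ has exactly one normal node if and only if a_i − a_{i+1} + b_i + b_{i+1} ≡ 0 (mod p) for all 1 ≤ i < h. -/

import Mathlib

/-- `l` (a partition written as a weakly decreasing function, rows 0-indexed)
has a removable node in row `r`, namely the node `(r+1, l r)` in 1-indexed coordinates. -/
def Rem (l : ℕ → ℕ) (r : ℕ) : Prop := l (r + 1) < l r

/-- `l` has an addable node in row `r`, namely the node `(r+1, l r + 1)`. -/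
def Addb (l : ℕ → ℕ) (r : ℕ) : Prop := r = 0 ∨ l r < l (r - 1)

instance (l : ℕ → ℕ) (r : ℕ) : Decidable (Rem l r) :=
  inferInstanceAs (Decidable (_ < _))

instance (l : ℕ → ℕ) (r : ℕ) : Decidable (Addb l r) :=
  inferInstanceAs (Decidable (_ ∨ _))

/-- The `p`-residue (column minus row, mod `p`) of the removable node in row `r`. -/
def remRes (p : ℕ) (l : ℕ → ℕ) (r : ℕ) : ZMod p := (l r : ZMod p) - (r : ZMod p) - 1

/-- The `p`-residue of the addable node in row `r`. -/
def addRes (p : ℕ) (l : ℕ → ℕ) (r : ℕ) : ZMod p := (l r : ZMod p) - (r : ZMod p)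

/-- The removable node in row `r` is normal: reading, from the bottom row towards the top,
the addable (`+`) and removable (`-`) nodes whose residue equals that of this node, and
recursively cancelling adjacent `-+` pairs, its `-` survives.  Equivalently, for every
segment of rows `[s, r)` lying above row `r`, the number of addable nodes of the same
residue in those rows is at most the number of removable nodes of the same residue there. -/
def NormalNode (p : ℕ) (l : ℕ → ℕ) (r : ℕ) : Prop :=
  Rem l r ∧ ∀ s ≤ r,
    ((Finset.Ico s r).filter (fun t => Addb l t ∧ addRes p l t = remRes p l r)).card ≤
    ((Finset.Ico s r).filter (fun t => Rem l t ∧ remRes p l t = remRes p l r)).card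

/-- The addable node in row `r` is conormal: in the same bottom-to-top reading with
`-+` cancellation, its `+` survives. -/
def ConormalNode (p : ℕ) (l : ℕ → ℕ) (r : ℕ) : Prop :=
  Addb l r ∧ ∀ s,
    ((Finset.Ioc r s).filter (fun t => Rem l t ∧ remRes p l t = addRes p l r)).card ≤
    ((Finset.Ioc r s).filter (fun t => Addb l t ∧ addRes p l t = addRes p l r)).card


namespace JSAux

/-- Partial sums of the multiplicities. -/
def Bs (b : ℕ → ℕ) (i : ℕ) : ℕ := ∑ j ∈ Finset.range i, b j

theorem Bs_zero (b : ℕ → ℕ) : Bs b 0 = 0 := rfl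

theorem Bs_succ (b : ℕ → ℕ) (i : ℕ) : Bs b (i + 1) = Bs b i + b i :=
  Finset.sum_range_succ b i

theorem Bs_one (b : ℕ → ℕ) : Bs b 1 = b 0 := by
  have h := Bs_succ b 0
  rw [Bs_zero] at h
  simpa using h

theorem Bs_mono (b : ℕ → ℕ) {i k : ℕ} (hik : i ≤ k) : Bs b i ≤ Bs b k :=
  Finset.sum_le_sum_of_subset (Finset.range_subset_range.mpr hik)

section Main

variable {p h : ℕ} {a b l : ℕ → ℕ}

theorem Bs_lt (hb1 : ∀ j, j < h → 1 ≤ b j) {i k : ℕ} (hik : i < k) (hkh : k ≤ h) :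
    Bs b i < Bs b k := by
  have h1 : Bs b i + 1 ≤ Bs b (i + 1) := by
    rw [Bs_succ]
    have := hb1 i (lt_of_lt_of_le hik hkh)
    omega
  have h2 : Bs b (i + 1) ≤ Bs b k := Bs_mono b hik
  omega

theorem block_exists {r : ℕ} (hbh : r < Bs b h) :
    ∃ i, i < h ∧ Bs b i ≤ r ∧ r < Bs b (i + 1) := by
  have hP : ∃ k, r < Bs b (k + 1) := ⟨h, lt_of_lt_of_le hbh (Bs_mono b (Nat.le_succ h))⟩
  have hup : r < Bs b (Nat.find hP + 1) := Nat.find_spec hP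
  have hlow : Bs b (Nat.find hP) ≤ r := by
    rcases Nat.eq_zero_or_pos (Nat.find hP) with h0 | h0
    · rw [h0, Bs_zero]; exact Nat.zero_le r
    · have hm := Nat.find_min hP (Nat.sub_lt h0 one_pos)
      push_neg at hm
      have he : Nat.find hP - 1 + 1 = Nat.find hP := by omega
      rwa [he] at hm
  refine ⟨Nat.find hP, ?_, hlow, hup⟩
  by_contra hk
  push_neg at hk
  exact absurd (lt_of_le_of_lt (le_trans (Bs_mono b hk) hlow) hbh) (lt_irrefl _)

variable (hb1 : ∀ j, j < h → 1 ≤ b j)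
  (hl : ∀ i, i < h → ∀ r, (∑ j ∈ Finset.range i, b j) ≤ r →
      r < (∑ j ∈ Finset.range (i + 1), b j) → l r = a i)
  (hl0 : ∀ r, (∑ j ∈ Finset.range h, b j) ≤ r → l r = 0)

include hl in
theorem lval {i r : ℕ} (hi : i < h) (h1 : Bs b i ≤ r) (h2 : r < Bs b (i + 1)) :
    l r = a i := hl i hi r h1 h2

include hb1 hl hl0 in
theorem rem_iff (ha : ∀ i, i + 1 < h → a (i + 1) < a i) (ha1 : ∀ i, i < h → 1 ≤ a i)
    {r : ℕ} : Rem l r ↔ ∃ k, k < h ∧ r + 1 = Bs b (k + 1) := by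
  constructor
  · intro hrem
    have hrem' : l (r + 1) < l r := hrem
    have hrh : r < Bs b h := by
      by_contra hge
      push_neg at hge
      have h1 : l r = 0 := hl0 r hge
      rw [h1] at hrem'
      exact Nat.not_lt_zero _ hrem'
    obtain ⟨k, hk, hk1, hk2⟩ := block_exists hrh
    refine ⟨k, hk, ?_⟩
    by_contra hne
    have h1 : l r = a k := lval hl hk hk1 hk2
    have h2 : l (r + 1) = a k := lval hl hk (by omega) (by omega)
    rw [h1, h2] at hrem'
    exact lt_irrefl _ hrem'
  · rintro ⟨k, hk, hr⟩
    have hBk : Bs b k < Bs b (k + 1) := Bs_lt hb1 (Nat.lt_succ_self k) hk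
    have h1 : l r = a k := lval hl hk (by omega) (by omega)
    have h2 : l (r + 1) < a k := by
      rcases Nat.lt_or_ge (k + 1) h with hkh | hkh
      · have hB2 : Bs b (k + 1) < Bs b (k + 1 + 1) := Bs_lt hb1 (Nat.lt_succ_self _) hkh
        have hv := lval hl hkh (r := r + 1) (by omega) (by omega)
        rw [hv]
        exact ha k hkh
      · have hBh : Bs b h ≤ r + 1 := by
          have := Bs_mono b hkh
          omega
        have hv : l (r + 1) = 0 := hl0 _ hBh
        rw [hv]
        exact ha1 k hk
    show l (r + 1) < l r
    rw [h1]
    exact h2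

include hb1 hl hl0 in
theorem add_iff (ha : ∀ i, i + 1 < h → a (i + 1) < a i) (ha1 : ∀ i, i < h → 1 ≤ a i)
    {r : ℕ} : Addb l r ↔ ∃ k, k ≤ h ∧ r = Bs b k := by
  constructor
  · intro hadd
    have hadd' : r = 0 ∨ l r < l (r - 1) := hadd
    rcases hadd' with h0 | hlt
    · exact ⟨0, Nat.zero_le h, by rw [h0, Bs_zero]⟩
    · have hr0 : r ≠ 0 := by
        rintro rfl
        simp at hlt
      rcases Nat.lt_or_ge r (Bs b h) with hrh | hrh
      · obtain ⟨k, hk, hk1, hk2⟩ := block_exists hrh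
        refine ⟨k, Nat.le_of_lt hk, ?_⟩
        by_contra hne
        have h1 : l r = a k := lval hl hk hk1 hk2
        have h2 : l (r - 1) = a k := lval hl hk (by omega) (by omega)
        rw [h1, h2] at hlt
        exact lt_irrefl _ hlt
      · rcases Nat.eq_or_lt_of_le hrh with heq | hgt
        · exact ⟨h, le_refl h, heq.symm⟩
        · have h1 : l r = 0 := hl0 r hrh
          have h2 : l (r - 1) = 0 := hl0 (r - 1) (show Bs b h ≤ r - 1 by omega)
          rw [h1, h2] at hlt
          exact absurd hlt (lt_irrefl 0)
  · rintro ⟨k, hk, rfl⟩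
    rcases Nat.eq_zero_or_pos k with rfl | hkpos
    · exact Or.inl rfl
    · show Bs b k = 0 ∨ l (Bs b k) < l (Bs b k - 1)
      right
      obtain ⟨m, rfl⟩ := Nat.exists_eq_add_of_lt hkpos
      have hkk : 0 + m + 1 = m + 1 := by omega
      rw [hkk] at hk ⊢
      have hmh : m < h := by omega
      have hBm : Bs b m < Bs b (m + 1) := Bs_lt hb1 (Nat.lt_succ_self m) hk
      have h2 : l (Bs b (m + 1) - 1) = a m := lval hl hmh (by omega) (by omega)
      rcases Nat.lt_or_ge (m + 1) h with hkh | hkh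
      · have hB2 : Bs b (m + 1) < Bs b (m + 1 + 1) := Bs_lt hb1 (Nat.lt_succ_self _) hkh
        have h1 : l (Bs b (m + 1)) = a (m + 1) := lval hl hkh (by omega) (by omega)
        rw [h1, h2]
        exact ha m hkh
      · have hkeq : m + 1 = h := by omega
        have h1 : l (Bs b (m + 1)) = 0 := hl0 _ (by rw [hkeq]; exact Nat.le_refl _)
        rw [h1, h2]
        exact ha1 m hmh

include hb1 hl in
theorem remres_eq {k r : ℕ} (hk : k < h) (hr : r + 1 = Bs b (k + 1)) :
    remRes p l r = (a k : ZMod p) - (Bs b (k + 1) : ZMod p) := by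
  have hBk : Bs b k < Bs b (k + 1) := Bs_lt hb1 (Nat.lt_succ_self k) hk
  have h1 : l r = a k := lval hl hk (by omega) (by omega)
  have h2 : ((Bs b (k + 1) : ℕ) : ZMod p) = (r : ZMod p) + 1 := by
    rw [← hr]; push_cast; ring
  rw [remRes, h1, h2]; ring

include hb1 hl in
theorem addres_eq {k : ℕ} (hk : k < h) :
    addRes p l (Bs b k) = (a k : ZMod p) - (Bs b k : ZMod p) := by
  have hBk : Bs b k < Bs b (k + 1) := Bs_lt hb1 (Nat.lt_succ_self k) hk
  have h1 : l (Bs b k) = a k := lval hl hk (le_refl _) hBk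
  rw [addRes, h1]

include hb1 hl hl0 in
theorem normal_zero (ha : ∀ i, i + 1 < h → a (i + 1) < a i) (ha1 : ∀ i, i < h → 1 ≤ a i)
    (hpos : 0 < h) (hbp : ∀ j, j < h → (b j : ZMod p) ≠ 0)
    {r : ℕ} (hr : r + 1 = Bs b 1) : NormalNode p l r := by
  constructor
  · exact (rem_iff hb1 hl hl0 ha ha1).mpr ⟨0, hpos, hr⟩
  · intro s hs
    have hres : remRes p l r = (a 0 : ZMod p) - (Bs b (0 + 1) : ZMod p) :=
      remres_eq hb1 hl hpos (by rw [show (0 : ℕ) + 1 = 1 from rfl]; exact hr)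
    have hempty : ((Finset.Ico s r).filter
        (fun t => Addb l t ∧ addRes p l t = remRes p l r)) = ∅ := by
      rw [Finset.filter_eq_empty_iff]
      rintro t ht ⟨hadd, hres'⟩
      rw [Finset.mem_Ico] at ht
      obtain ⟨k, hk, rfl⟩ := (add_iff hb1 hl hl0 ha ha1).mp hadd
      have hB01 : Bs b 0 < Bs b 1 := Bs_lt hb1 Nat.one_pos hpos
      have hk0 : k = 0 := by
        by_contra hne
        have : Bs b 1 ≤ Bs b k := Bs_mono b (by omega)
        omega
      subst hk0
      rw [addres_eq hb1 hl hpos, hres] at hres'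
      have hB0 : ((Bs b 0 : ℕ) : ZMod p) = 0 := by
        rw [Bs_zero]
        exact Nat.cast_zero
      have hB1 : ((Bs b (0 + 1) : ℕ) : ZMod p) = 0 := by
        linear_combination hres' + hB0
      rw [show (0 : ℕ) + 1 = 1 from rfl, Bs_one] at hB1
      exact hbp 0 hpos hB1
    rw [hempty]
    simp

include hb1 hl hl0 in
theorem not_normal_mid (ha : ∀ i, i + 1 < h → a (i + 1) < a i) (ha1 : ∀ i, i < h → 1 ≤ a i)
    (hbp : ∀ j, j < h → (b j : ZMod p) ≠ 0)
    {i r : ℕ} (hi : i + 1 < h) (hr : r + 1 = Bs b (i + 2))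
    (hC : (a i : ZMod p) - (Bs b i : ZMod p) = (a (i + 1) : ZMod p) - (Bs b (i + 2) : ZMod p)) :
    ¬ NormalNode p l r := by
  rintro ⟨-, hall⟩
  have hB01 : Bs b i < Bs b (i + 1) := Bs_lt hb1 (by omega) (by omega)
  have hB12 : Bs b (i + 1) < Bs b (i + 2) := Bs_lt hb1 (by omega) hi
  have hsr : Bs b i ≤ r := by omega
  have hres : remRes p l r = (a (i + 1) : ZMod p) - (Bs b (i + 1 + 1) : ZMod p) :=
    remres_eq hb1 hl hi (by rw [show i + 1 + 1 = i + 2 from rfl]; exact hr)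
  rw [show i + 1 + 1 = i + 2 from rfl] at hres
  have hcard := hall (Bs b i) hsr
  have hrem_empty : ((Finset.Ico (Bs b i) r).filter
      (fun t => Rem l t ∧ remRes p l t = remRes p l r)) = ∅ := by
    rw [Finset.filter_eq_empty_iff]
    rintro t ht ⟨hremt, hres'⟩
    rw [Finset.mem_Ico] at ht
    obtain ⟨j, hj, hjr⟩ := (rem_iff hb1 hl hl0 ha ha1).mp hremt
    have hji : j = i := by
      have hx1 : Bs b (j + 1) < Bs b (i + 2) := by omega
      have hx2 : Bs b i < Bs b (j + 1) := by omega
      by_contra hne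
      rcases Nat.lt_or_ge j i with hlt | hge
      · have : Bs b (j + 1) ≤ Bs b i := Bs_mono b (by omega)
        omega
      · have : Bs b (i + 2) ≤ Bs b (j + 1) := Bs_mono b (by omega)
        omega
    rw [hji] at hjr
    rw [remres_eq hb1 hl (show i < h by omega) hjr, hres, ← hC] at hres'
    have hBsucc : ((Bs b (i + 1) : ℕ) : ZMod p) = (Bs b i : ZMod p) + (b i : ZMod p) := by
      rw [Bs_succ, Nat.cast_add]
    apply hbp i (by omega)
    linear_combination - hres' - hBsucc
  have hmem : Bs b i ∈ ((Finset.Ico (Bs b i) r).filter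
      (fun t => Addb l t ∧ addRes p l t = remRes p l r)) := by
    rw [Finset.mem_filter, Finset.mem_Ico]
    refine ⟨⟨le_refl _, by omega⟩, ?_, ?_⟩
    · exact (add_iff hb1 hl hl0 ha ha1).mpr ⟨i, by omega, rfl⟩
    · rw [addres_eq hb1 hl (show i < h by omega), hres, hC]
  rw [hrem_empty] at hcard
  simp only [Finset.card_empty, Nat.le_zero, Finset.card_eq_zero] at hcard
  rw [hcard] at hmem
  exact absurd hmem (Finset.notMem_empty _)

include hb1 hl hl0 in
theorem normal_mid (ha : ∀ i, i + 1 < h → a (i + 1) < a i) (ha1 : ∀ i, i < h → 1 ≤ a i)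
    (hbp : ∀ j, j < h → (b j : ZMod p) ≠ 0)
    {i r : ℕ} (hi : i + 1 < h) (hr : r + 1 = Bs b (i + 2))
    (hmin : ∀ j, j < i → (a j : ZMod p) - (Bs b j : ZMod p)
      = (a (j + 1) : ZMod p) - (Bs b (j + 2) : ZMod p))
    (hfail : (a i : ZMod p) - (Bs b i : ZMod p)
      ≠ (a (i + 1) : ZMod p) - (Bs b (i + 2) : ZMod p)) :
    NormalNode p l r := by
  constructor
  · exact (rem_iff hb1 hl hl0 ha ha1).mpr ⟨i + 1, hi, by rw [show i + 1 + 1 = i + 2 from rfl]; exact hr⟩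
  · intro s hs
    have hres : remRes p l r = (a (i + 1) : ZMod p) - (Bs b (i + 1 + 1) : ZMod p) :=
      remres_eq hb1 hl hi (by rw [show i + 1 + 1 = i + 2 from rfl]; exact hr)
    rw [show i + 1 + 1 = i + 2 from rfl] at hres
    classical
    set J : Finset ℕ := (Finset.range i).filter
      (fun j => s ≤ Bs b j ∧ (a (j + 1) : ZMod p) - (Bs b (j + 2) : ZMod p)
        = (a (i + 1) : ZMod p) - (Bs b (i + 2) : ZMod p)) with hJ
    have hsub : ((Finset.Ico s r).filter
        (fun t => Addb l t ∧ addRes p l t = remRes p l r)) ⊆ J.image (Bs b) := by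
      intro t ht
      rw [Finset.mem_filter, Finset.mem_Ico] at ht
      obtain ⟨⟨hts, htr⟩, hadd, hrest⟩ := ht
      obtain ⟨k, hk, rfl⟩ := (add_iff hb1 hl hl0 ha ha1).mp hadd
      have hki : k ≤ i + 1 := by
        by_contra hgt
        have : Bs b (i + 2) ≤ Bs b k := Bs_mono b (by omega)
        omega
      have hkh : k < h := by omega
      rw [addres_eq hb1 hl hkh, hres] at hrest
      have hki' : k < i := by
        rcases Nat.lt_or_ge k i with h' | h'
        · exact h'
        · exfalso
          rcases Nat.eq_or_lt_of_le h' with h'' | h'' 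
          · exact hfail (by rw [← h''] at hrest; exact hrest)
          · have hki1 : k = i + 1 := by omega
            subst hki1
            have hBsucc : ((Bs b (i + 2) : ℕ) : ZMod p)
                = (Bs b (i + 1) : ZMod p) + (b (i + 1) : ZMod p) := by
              rw [show Bs b (i + 2) = Bs b (i + 1) + b (i + 1) from Bs_succ b (i + 1),
                Nat.cast_add]
            apply hbp (i + 1) hi
            linear_combination hrest - hBsucc
      rw [Finset.mem_image]
      refine ⟨k, ?_, rfl⟩
      rw [hJ, Finset.mem_filter, Finset.mem_range]
      exact ⟨hki', hts, by rw [← hmin k hki']; exact hrest⟩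
    have hinj : J.card ≤ ((Finset.Ico s r).filter
        (fun t => Rem l t ∧ remRes p l t = remRes p l r)).card := by
      apply Finset.card_le_card_of_injOn (fun j => Bs b (j + 2) - 1)
      · intro j hj
        simp only [Finset.mem_coe, hJ, Finset.mem_filter, Finset.mem_range] at hj
        obtain ⟨hji, hjs, hjres⟩ := hj
        have hj2h : j + 2 ≤ h := by omega
        have hBj : Bs b j < Bs b (j + 2) := Bs_lt hb1 (by omega) hj2h
        have hBj2 : Bs b (j + 2) < Bs b (i + 2) := Bs_lt hb1 (by omega) (by omega)
        have hrj : (Bs b (j + 2) - 1) + 1 = Bs b (j + 1 + 1) := by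
          rw [show j + 1 + 1 = j + 2 from rfl]; omega
        simp only [Finset.mem_coe, Finset.mem_filter, Finset.mem_Ico]
        refine ⟨⟨by omega, by omega⟩, ?_, ?_⟩
        · exact (rem_iff hb1 hl hl0 ha ha1).mpr ⟨j + 1, by omega, hrj⟩
        · rw [remres_eq hb1 hl (show j + 1 < h by omega) hrj,
            show j + 1 + 1 = j + 2 from rfl, hres, hjres]
      · intro x hx y hy hxy
        rw [Finset.mem_coe, hJ, Finset.mem_filter, Finset.mem_range] at hx hy
        have hBx : Bs b x < Bs b (x + 2) := Bs_lt hb1 (by omega) (by omega)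
        have hBy : Bs b y < Bs b (y + 2) := Bs_lt hb1 (by omega) (by omega)
        simp only at hxy
        have hxy' : Bs b (x + 2) = Bs b (y + 2) := by omega
        by_contra hne
        rcases Nat.lt_or_ge x y with hlt | hge
        · have : Bs b (x + 2) < Bs b (y + 2) := Bs_lt hb1 (by omega) (by omega)
          omega
        · have : Bs b (y + 2) < Bs b (x + 2) := Bs_lt hb1 (by omega) (by omega)
          omega
    calc ((Finset.Ico s r).filter
        (fun t => Addb l t ∧ addRes p l t = remRes p l r)).card
        ≤ (J.image (Bs b)).card := Finset.card_le_card hsub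
      _ ≤ J.card := Finset.card_image_le
      _ ≤ _ := hinj

end Main

end JSAux

/-- JS-partition criterion: for a `p`-regular partition written as
`(a 0 ^ b 0, a 1 ^ b 1, …, a (h-1) ^ b (h-1))` with `a 0 > a 1 > … ≥ 1` and
`1 ≤ b i ≤ p - 1`, there is exactly one normal node if and only if
`a i - a (i+1) + b i + b (i+1) ≡ 0 (mod p)` for all `i` with `i + 1 < h`. -/
theorem stmt3 (p : ℕ) (hp : p.Prime) (h : ℕ) (hpos : 0 < h) (a b : ℕ → ℕ)
    (ha : ∀ i, i + 1 < h → a (i + 1) < a i)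
    (ha1 : ∀ i, i < h → 1 ≤ a i)
    (hb : ∀ i, i < h → 1 ≤ b i ∧ b i ≤ p - 1)
    (l : ℕ → ℕ)
    (hl : ∀ i, i < h → ∀ r, (∑ j ∈ Finset.range i, b j) ≤ r →
      r < (∑ j ∈ Finset.range (i + 1), b j) → l r = a i)
    (hl0 : ∀ r, (∑ j ∈ Finset.range h, b j) ≤ r → l r = 0) :
    {r | NormalNode p l r}.ncard = 1 ↔
      ∀ i, i + 1 < h →
        (a i : ZMod p) - (a (i + 1) : ZMod p) + (b i : ZMod p) + (b (i + 1) : ZMod p) = 0 := by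
  classical
  have hb1 : ∀ j, j < h → 1 ≤ b j := fun j hj => (hb j hj).1
  haveI : NeZero p := ⟨hp.ne_zero⟩
  have hbp : ∀ j, j < h → (b j : ZMod p) ≠ 0 := by
    intro j hj hbj
    rw [ZMod.natCast_eq_zero_iff] at hbj
    have h1 := hb j hj
    have h2 := Nat.le_of_dvd (by omega) hbj
    have := hp.two_le
    omega
  have hBkey : ∀ i : ℕ, ((JSAux.Bs b (i + 2) : ℕ) : ZMod p)
      = (JSAux.Bs b i : ZMod p) + (b i : ZMod p) + (b (i + 1) : ZMod p) := by
    intro i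
    have e1 : JSAux.Bs b (i + 2) = JSAux.Bs b i + b i + b (i + 1) := by
      rw [show i + 2 = (i + 1) + 1 from rfl, JSAux.Bs_succ, JSAux.Bs_succ]
    rw [e1]
    push_cast
    ring
  have hCiff : ∀ i : ℕ,
      ((a i : ZMod p) - (a (i + 1) : ZMod p) + (b i : ZMod p) + (b (i + 1) : ZMod p) = 0)
      ↔ ((a i : ZMod p) - (JSAux.Bs b i : ZMod p)
          = (a (i + 1) : ZMod p) - (JSAux.Bs b (i + 2) : ZMod p)) := by
    intro i
    constructor
    · intro H
      linear_combination H + hBkey i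
    · intro H
      linear_combination H - hBkey i
  have hB1pos : 0 < JSAux.Bs b 1 := by
    rw [JSAux.Bs_one]
    exact hb1 0 hpos
  constructor
  · -- exactly one normal node implies the congruences
    intro hcard i hi
    by_contra hCi
    have hex : ∃ j, j + 1 < h ∧
        ¬ ((a j : ZMod p) - (a (j + 1) : ZMod p) + (b j : ZMod p) + (b (j + 1) : ZMod p) = 0) :=
      ⟨i, hi, hCi⟩
    have hspec := Nat.find_spec hex
    have hmin0 : ∀ j, j < Nat.find hex → ¬ (j + 1 < h ∧
        ¬ ((a j : ZMod p) - (a (j + 1) : ZMod p) + (b j : ZMod p) + (b (j + 1) : ZMod p) = 0)) :=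
      fun j hj => Nat.find_min hex hj
    set i0 := Nat.find hex with hi0
    obtain ⟨hi0h, hi0C⟩ := hspec
    have hmin' : ∀ j, j < i0 → (a j : ZMod p) - (JSAux.Bs b j : ZMod p)
        = (a (j + 1) : ZMod p) - (JSAux.Bs b (j + 2) : ZMod p) := by
      intro j hj
      have hjh : j + 1 < h := by omega
      have hnj := hmin0 j hj
      push_neg at hnj
      exact (hCiff j).mp (hnj hjh)
    have hfail : (a i0 : ZMod p) - (JSAux.Bs b i0 : ZMod p)
        ≠ (a (i0 + 1) : ZMod p) - (JSAux.Bs b (i0 + 2) : ZMod p) := by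
      intro hEq
      exact hi0C ((hCiff i0).mpr hEq)
    have hB2 : JSAux.Bs b 1 < JSAux.Bs b (i0 + 2) :=
      JSAux.Bs_lt hb1 (by omega) (by omega)
    have hn1 : NormalNode p l (JSAux.Bs b 1 - 1) :=
      JSAux.normal_zero hb1 hl hl0 ha ha1 hpos hbp (by omega)
    have hn2 : NormalNode p l (JSAux.Bs b (i0 + 2) - 1) :=
      JSAux.normal_mid hb1 hl hl0 ha ha1 hbp hi0h (by omega) hmin' hfail
    have hfin : {r | NormalNode p l r}.Finite := by
      apply Set.Finite.subset (Set.finite_Iio (JSAux.Bs b h))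
      intro r hr
      have hr' : NormalNode p l r := hr
      obtain ⟨k, hk, hrk⟩ := (JSAux.rem_iff hb1 hl hl0 ha ha1).mp hr'.1
      have : JSAux.Bs b (k + 1) ≤ JSAux.Bs b h := JSAux.Bs_mono b (by omega)
      exact Set.mem_Iio.mpr (by omega)
    have h2 : 1 < {r | NormalNode p l r}.ncard := by
      rw [Set.one_lt_ncard_iff hfin]
      exact ⟨JSAux.Bs b 1 - 1, JSAux.Bs b (i0 + 2) - 1, hn1, hn2, by omega⟩
    omega
  · -- the congruences imply there is exactly one normal node
    intro hcond
    have hset : {r | NormalNode p l r} = {JSAux.Bs b 1 - 1} := by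
      apply Set.eq_singleton_iff_unique_mem.mpr
      constructor
      · exact JSAux.normal_zero hb1 hl hl0 ha ha1 hpos hbp (by omega)
      · intro r hr
        have hr' : NormalNode p l r := hr
        obtain ⟨k, hk, hrk⟩ := (JSAux.rem_iff hb1 hl hl0 ha ha1).mp hr'.1
        rcases Nat.eq_zero_or_pos k with rfl | hkpos
        · rw [show (0 : ℕ) + 1 = 1 from rfl] at hrk
          omega
        · exfalso
          obtain ⟨m, rfl⟩ := Nat.exists_eq_add_of_lt hkpos
          have hkk : 0 + m + 1 = m + 1 := by omega
          rw [hkk] at hrk hk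
          have hm : m + 1 < h := hk
          have hC := (hCiff m).mp (hcond m hm)
          have hrk' : r + 1 = JSAux.Bs b (m + 2) := by
            rw [show m + 2 = m + 1 + 1 from rfl]
            exact hrk
          exact JSAux.not_normal_mid hb1 hl hl0 ha ha1 hbp hm hrk' hC hr'
    rw [hset, Set.ncard_singleton]
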